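/- Let q_1, …, q_n be unit vectors in ℝ^d and t ≥ 1. If the homogeneous polynomials x ↦ (q_j · x)^t, j = 1, …, n, span Hom_t(ℝ^d), then there exist weights ω_1, …, ω_n ∈ ℝ such that {(q_j, ω_j)}_{j=1}^n is a cubature for Hom_t(S^{d−1}). -/

import Mathlib

open MvPolynomial MeasureTheory

-- Key multinomial-type identity
lemma coeff_linear_pow {d : ℕ} (a : Fin d → ℝ) :
    ∀ (t : ℕ) (m : Fin d →₀ ℕ), (∑ i, m i) = t →
      MvPolynomial.coeff m ((∑ i, MvPolynomial.C (a i) * MvPolynomial.X i) ^ t) *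
        (∏ i, ((m i).factorial : ℝ)) = (t.factorial : ℝ) * ∏ i, a i ^ m i := by
  intro t
  induction t with
  | zero =>
    intro m hm
    have hm0 : m = 0 := by
      ext i
      exact Finset.sum_eq_zero_iff.mp hm i (Finset.mem_univ i)
    subst hm0
    simp
  | succ t ih =>
    intro m hm
    classical
    set ℓ : MvPolynomial (Fin d) ℝ := ∑ i, MvPolynomial.C (a i) * MvPolynomial.X i with hℓ
    have expand : ℓ ^ (t + 1) = ∑ i, MvPolynomial.C (a i) * (ℓ ^ t * MvPolynomial.X i) := by
      rw [pow_succ, hℓ, Finset.mul_sum]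
      exact Finset.sum_congr rfl fun i _ => by ring
    have hco : MvPolynomial.coeff m (ℓ ^ (t + 1)) =
        ∑ i, a i * MvPolynomial.coeff m (ℓ ^ t * MvPolynomial.X i) := by
      rw [expand, MvPolynomial.coeff_sum]
      exact Finset.sum_congr rfl fun i _ => MvPolynomial.coeff_C_mul _ _ _
    rw [hco, Finset.sum_mul]
    have hterm : ∀ i : Fin d,
        a i * MvPolynomial.coeff m (ℓ ^ t * MvPolynomial.X i) * (∏ j, ((m j).factorial : ℝ)) =
          (m i : ℝ) * ((t.factorial : ℝ) * ∏ j, a j ^ m j) := by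
      intro i
      rw [MvPolynomial.coeff_mul_X']
      by_cases h : i ∈ m.support
      · rw [if_pos h]
        have hmi : m i ≠ 0 := Finsupp.mem_support_iff.mp h
        set m' : Fin d →₀ ℕ := m - Finsupp.single i 1 with hm'
        have hm'i : m' i = m i - 1 := by
          simp [hm', Finsupp.tsub_apply, Finsupp.single_apply]
        have hm'j : ∀ j, j ≠ i → m' j = m j := by
          intro j hj
          simp [hm', Finsupp.tsub_apply, Finsupp.single_apply, (Ne.symm hj)]
        -- sum of m'
        have hsum' : (∑ j, m' j) = t := by
          have h1 : m i + ∑ j ∈ Finset.univ.erase i, m j = t + 1 := by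
            rw [Finset.add_sum_erase _ _ (Finset.mem_univ i)]; exact hm
          have h2 : (∑ j, m' j) = m' i + ∑ j ∈ Finset.univ.erase i, m' j :=
            (Finset.add_sum_erase _ _ (Finset.mem_univ i)).symm
          have h3 : ∑ j ∈ Finset.univ.erase i, m' j = ∑ j ∈ Finset.univ.erase i, m j :=
            Finset.sum_congr rfl fun j hj => hm'j j (Finset.ne_of_mem_erase hj)
          rw [h2, h3, hm'i]
          omega
        -- factorial product
        have hWnat : (∏ j, (m j).factorial) = m i * ∏ j, (m' j).factorial := by
          rw [← Finset.mul_prod_erase _ _ (Finset.mem_univ i),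
              ← Finset.mul_prod_erase _ (fun j => (m' j).factorial) (Finset.mem_univ i)]
          have h3 : ∏ j ∈ Finset.univ.erase i, (m' j).factorial
              = ∏ j ∈ Finset.univ.erase i, (m j).factorial :=
            Finset.prod_congr rfl fun j hj => by rw [hm'j j (Finset.ne_of_mem_erase hj)]
          rw [h3, hm'i, ← mul_assoc, Nat.mul_factorial_pred hmi]
        have hW : (∏ j, ((m j).factorial : ℝ)) = (m i : ℝ) * ∏ j, ((m' j).factorial : ℝ) := by
          exact_mod_cast congrArg (Nat.cast : ℕ → ℝ) hWnat
        -- power product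
        have hP : (∏ j, a j ^ m j) = a i * ∏ j, a j ^ m' j := by
          rw [← Finset.mul_prod_erase _ _ (Finset.mem_univ i),
              ← Finset.mul_prod_erase _ (fun j => a j ^ m' j) (Finset.mem_univ i)]
          have h3 : ∏ j ∈ Finset.univ.erase i, a j ^ m' j
              = ∏ j ∈ Finset.univ.erase i, a j ^ m j :=
            Finset.prod_congr rfl fun j hj => by rw [hm'j j (Finset.ne_of_mem_erase hj)]
          rw [h3, hm'i, ← mul_assoc]
          congr 1
          rw [← pow_succ']
          congr 1
          omega
        have hih := ih m' hsum'
        rw [hW, hP]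
        calc a i * MvPolynomial.coeff m' (ℓ ^ t) * ((m i : ℝ) * ∏ j, ((m' j).factorial : ℝ))
            = (m i : ℝ) * a i * (MvPolynomial.coeff m' (ℓ ^ t) * ∏ j, ((m' j).factorial : ℝ)) := by
              ring
          _ = (m i : ℝ) * a i * ((t.factorial : ℝ) * ∏ j, a j ^ m' j) := by rw [hih]
          _ = (m i : ℝ) * ((t.factorial : ℝ) * (a i * ∏ j, a j ^ m' j)) := by ring
      · rw [if_neg h]
        have hmi : m i = 0 := Finsupp.notMem_support_iff.mp h
        simp [hmi]
    rw [Finset.sum_congr rfl fun i _ => hterm i, ← Finset.sum_mul]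
    have : (∑ i, (m i : ℝ)) = ((t + 1 : ℕ) : ℝ) := by
      rw [← Nat.cast_sum]
      exact_mod_cast congrArg (Nat.cast : ℕ → ℝ) hm
    rw [this, Nat.factorial_succ]
    push_cast
    ring

lemma eq_zero_of_eval_zero {d n t : ℕ} (q : Fin n → EuclideanSpace ℝ (Fin d))
    (hspan : Submodule.span ℝ
        (Set.range fun j => (∑ i, MvPolynomial.C (q j i) * MvPolynomial.X i) ^ t) =
      MvPolynomial.homogeneousSubmodule (Fin d) ℝ t)
    (p : MvPolynomial (Fin d) ℝ) (hp : p ∈ MvPolynomial.homogeneousSubmodule (Fin d) ℝ t)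
    (hev : ∀ j, MvPolynomial.eval (fun i => q j i) p = 0) : p = 0 := by
  classical
  set B : MvPolynomial (Fin d) ℝ → ℝ := fun r =>
    ∑ m ∈ p.support, MvPolynomial.coeff m p * MvPolynomial.coeff m r *
      ∏ i, ((m i).factorial : ℝ) with hB
  have hdeg : ∀ m ∈ p.support, (∑ i, m i) = t := by
    intro m hm
    have h1 := (MvPolynomial.mem_homogeneousSubmodule _ _).mp hp
      (MvPolynomial.mem_support_iff.mp hm)
    rw [← h1, Finsupp.weight_apply, Finsupp.sum_fintype]
    · exact Finset.sum_congr rfl fun i _ => by simp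
    · intro i; simp
  have hgen : ∀ j, B ((∑ i, MvPolynomial.C (q j i) * MvPolynomial.X i) ^ t) = 0 := by
    intro j
    have : B ((∑ i, MvPolynomial.C (q j i) * MvPolynomial.X i) ^ t) =
        (t.factorial : ℝ) * MvPolynomial.eval (fun i => q j i) p := by
      rw [hB, MvPolynomial.eval_eq', Finset.mul_sum]
      refine Finset.sum_congr rfl fun m hm => ?_
      rw [mul_assoc, coeff_linear_pow _ t m (hdeg m hm)]
      ring
    rw [this, hev j, mul_zero]
  have hzero : B 0 = 0 := by simp [hB]
  have hadd : ∀ r s, B (r + s) = B r + B s := by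
    intro r s
    simp only [hB, MvPolynomial.coeff_add]
    rw [← Finset.sum_add_distrib]
    exact Finset.sum_congr rfl fun m _ => by ring
  have hsmul : ∀ (c : ℝ) r, B (c • r) = c * B r := by
    intro c r
    simp only [hB, MvPolynomial.coeff_smul, smul_eq_mul, Finset.mul_sum]
    exact Finset.sum_congr rfl fun m _ => by ring
  have hall : ∀ r ∈ MvPolynomial.homogeneousSubmodule (Fin d) ℝ t, B r = 0 := by
    intro r hr
    rw [← hspan] at hr
    refine Submodule.span_induction ?_ hzero ?_ ?_ hr
    · rintro x ⟨j, rfl⟩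
      exact hgen j
    · intro x y _ _ hx hy
      rw [hadd, hx, hy, add_zero]
    · intro a x _ hx
      rw [hsmul, hx, mul_zero]
  have hBp : B p = 0 := hall p hp
  by_contra hp0
  obtain ⟨m0, hm0⟩ := Finset.nonempty_iff_ne_empty.mpr
    (fun h => hp0 (MvPolynomial.support_eq_empty.mp h))
  have hpos : 0 < B p := by
    refine Finset.sum_pos' ?_ ⟨m0, hm0, ?_⟩
    · intro m _
      exact mul_nonneg (mul_self_nonneg _)
        (Finset.prod_nonneg fun i _ => by positivity)
    · refine mul_pos (mul_self_pos.mpr (MvPolynomial.mem_support_iff.mp hm0))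
        (Finset.prod_pos fun i _ => by positivity)
  rw [hBp] at hpos
  exact lt_irrefl 0 hpos


/-- The unit sphere `S^{d-1}` in `ℝ^d`. -/
noncomputable def unitSphere (d : ℕ) := Metric.sphere (0 : EuclideanSpace ℝ (Fin d)) 1

/-- A linear isometry (element of `O(d)`) maps the unit sphere to itself. -/
noncomputable def sphereMap (d : ℕ) (f : EuclideanSpace ℝ (Fin d) ≃ₗᵢ[ℝ] EuclideanSpace ℝ (Fin d))
    (x : unitSphere d) : unitSphere d :=
  ⟨f x, by
    have hx := x.2
    simp only [unitSphere, mem_sphere_iff_norm, sub_zero] at hx ⊢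
    rw [f.norm_map]; exact hx⟩

/-- If the polynomials `x ↦ (q j ⬝ x)^t` span `Hom_t(ℝ^d)`, then there are
weights `ω j` such that `{(q j, ω j)}` is a cubature for `Hom_t(S^{d-1})` with respect to the
rotation-invariant probability measure on the sphere. -/
theorem cubature_of_frame (d n t : ℕ) (ht : 1 ≤ t)
    (q : Fin n → EuclideanSpace ℝ (Fin d)) (hq : ∀ j, ‖q j‖ = 1)
    (hspan : Submodule.span ℝ
        (Set.range fun j => (∑ i, MvPolynomial.C (q j i) * MvPolynomial.X i) ^ t) =
      MvPolynomial.homogeneousSubmodule (Fin d) ℝ t)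
    (σ : Measure (unitSphere d)) [IsProbabilityMeasure σ]
    (hinv : ∀ f : EuclideanSpace ℝ (Fin d) ≃ₗᵢ[ℝ] EuclideanSpace ℝ (Fin d),
      Measure.map (sphereMap d f) σ = σ) :
    ∃ ω : Fin n → ℝ, ∀ p ∈ MvPolynomial.homogeneousSubmodule (Fin d) ℝ t,
      ∫ x : unitSphere d,
          MvPolynomial.eval (fun i => (x : EuclideanSpace ℝ (Fin d)) i) p ∂σ =
        ∑ j, ω j * MvPolynomial.eval (fun i => q j i) p := by
  classical
  haveI : CompactSpace (unitSphere d) :=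
    isCompact_iff_compactSpace.mp (isCompact_sphere (0 : EuclideanSpace ℝ (Fin d)) 1)
  set V := MvPolynomial.homogeneousSubmodule (Fin d) ℝ t with hV
  -- the evaluation linear map
  set E : V →ₗ[ℝ] (Fin n → ℝ) :=
    { toFun := fun p j => MvPolynomial.eval (fun i => q j i) (p : MvPolynomial (Fin d) ℝ)
      map_add' := by intro x y; funext j; simp
      map_smul' := by intro c x; funext j; simp [MvPolynomial.smul_eval] } with hE
  have hker : LinearMap.ker E = ⊥ := by
    rw [LinearMap.ker_eq_bot']
    intro p hp
    have hev : ∀ j, MvPolynomial.eval (fun i => q j i) (p : MvPolynomial (Fin d) ℝ) = 0 := by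
      intro j
      exact congrFun hp j
    have := eq_zero_of_eval_zero q hspan (p : MvPolynomial (Fin d) ℝ) p.2 hev
    exact Subtype.ext this
  obtain ⟨g, hg⟩ := E.exists_leftInverse_of_injective hker
  -- the polynomials r j
  set r : Fin n → MvPolynomial (Fin d) ℝ := fun j => (g (Pi.single j 1) : MvPolynomial (Fin d) ℝ)
    with hr
  -- continuity and integrability
  have hcont : ∀ (s : MvPolynomial (Fin d) ℝ), Continuous fun x : unitSphere d =>
      MvPolynomial.eval (fun i => (x : EuclideanSpace ℝ (Fin d)) i) s := by
    intro s
    exact (MvPolynomial.continuous_eval s).comp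
      (continuous_pi fun i => (EuclideanSpace.proj i).continuous.comp continuous_subtype_val)
  have hint : ∀ (s : MvPolynomial (Fin d) ℝ), Integrable (fun x : unitSphere d =>
      MvPolynomial.eval (fun i => (x : EuclideanSpace ℝ (Fin d)) i) s) σ := by
    intro s
    exact (hcont s).integrable_of_hasCompactSupport (isClosed_tsupport _).isCompact
  refine ⟨fun j => ∫ x : unitSphere d,
      MvPolynomial.eval (fun i => (x : EuclideanSpace ℝ (Fin d)) i) (r j) ∂σ, ?_⟩
  intro p hp
  set P : V := ⟨p, hp⟩ with hP
  have hgE : g (E P) = P := by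
    have := LinearMap.congr_fun hg P
    simpa using this
  have hEdecomp : E P = ∑ j, (E P j) • (Pi.single j (1:ℝ) : Fin n → ℝ) := by
    funext k
    simp [Pi.single_apply, Finset.sum_ite_eq', mul_comm]
  have hPdecomp : P = ∑ j, (E P j) • g (Pi.single j 1) := by
    conv_lhs => rw [← hgE, hEdecomp]
    rw [map_sum]
    exact Finset.sum_congr rfl fun j _ => by rw [_root_.map_smul]
  have hpoly : p = ∑ j, (E P j) • r j := by
    have := congrArg (Subtype.val : V → MvPolynomial (Fin d) ℝ) hPdecomp
    simpa [hr] using this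
  have hevalpt : ∀ x : unitSphere d,
      MvPolynomial.eval (fun i => (x : EuclideanSpace ℝ (Fin d)) i) p =
        ∑ j, (E P j) * MvPolynomial.eval (fun i => (x : EuclideanSpace ℝ (Fin d)) i) (r j) := by
    intro x
    rw [hpoly, map_sum]
    exact Finset.sum_congr rfl fun j _ => MvPolynomial.smul_eval _ _ _
  rw [integral_congr_ae (Filter.Eventually.of_forall hevalpt)]
  rw [integral_finset_sum _ (fun j _ => ((hint (r j)).const_mul (E P j)))]
  refine Finset.sum_congr rfl fun j _ => ?_
  rw [MeasureTheory.integral_const_mul]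
  have : E P j = MvPolynomial.eval (fun i => q j i) p := rfl
  rw [this, mul_comm]
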